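/- Let Γ be a countable group and let α ∈ S(Γ,X) be a given action of Γ on the Cantor set X. Then the set of actions β ∈ S(Γ,X) that are extensions of α is dense in S(Γ,X). -/

import Mathlib

open TopologicalSpace

/-- The group structure on the homeomorphism group of `X`,
with `(f * g) x = f (g x)`. -/
instance homeoGroup (X : Type*) [TopologicalSpace X] : Group (X ≃ₜ X) where
  mul f g := g.trans f
  one := Homeomorph.refl X
  inv := Homeomorph.symm
  mul_assoc _ _ _ := Homeomorph.ext fun _ => rfl
  one_mul _ := Homeomorph.ext fun _ => rfl
  mul_one _ := Homeomorph.ext fun _ => rfl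
  inv_mul_cancel f := Homeomorph.ext fun x => f.symm_apply_apply x

/-- The topology on `Homeo(X)` of uniform convergence of a homeomorphism together with
its inverse: for a compact metrizable space `X` the compact-open topology on `C(X, X)`
is the topology of uniform convergence, and we pull back the product topology along
`φ ↦ (φ, φ⁻¹)`. -/
instance homeoTopology (X : Type*) [TopologicalSpace X] : TopologicalSpace (X ≃ₜ X) :=
  TopologicalSpace.induced
    (fun φ : X ≃ₜ X => ((φ : C(X, X)), (φ.symm : C(X, X)))) inferInstance

/-- The space `S(Γ, X)` of actions of `Γ` on `X`, topologized as a subspace of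
the product space `∏_Γ Homeo(X)`. -/
instance actionSpaceTopology (Γ X : Type*) [Group Γ] [TopologicalSpace X] :
    TopologicalSpace (Γ →* (X ≃ₜ X)) :=
  TopologicalSpace.induced (fun α : Γ →* (X ≃ₜ X) => (α : Γ → X ≃ₜ X)) inferInstance


section Brouwer
open Set

section Aux
variable {X E F : Type*} [TopologicalSpace X]

def LCmap (f : X → E) : Prop := ∀ s : Set E, IsOpen (f ⁻¹' s)

theorem lcmap_of_fibers {f : X → E} (h : ∀ v, IsOpen (f ⁻¹' {v})) : LCmap f := by
  intro s
  have : f ⁻¹' s = ⋃ v : s, f ⁻¹' {(v : E)} := by ext x; simp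
  rw [this]; exact isOpen_iUnion fun v => h v

theorem LCmap.continuous [TopologicalSpace E] {f : X → E} (h : LCmap f) : Continuous f :=
  continuous_def.mpr fun s _ => h s

theorem LCmap.isClopen {f : X → E} (h : LCmap f) (s : Set E) : IsClopen (f ⁻¹' s) := by
  refine ⟨⟨?_⟩, h s⟩
  rw [show (f ⁻¹' s)ᶜ = f ⁻¹' sᶜ from rfl]
  exact h sᶜ

theorem LCmap.comp {f : X → E} (h : LCmap f) (g : E → F) : LCmap (g ∘ f) := by
  intro s; exact h (g ⁻¹' s)

theorem LCmap.glue {q : X → F} (hq : LCmap q) {G : F → X → E} (hG : ∀ f, LCmap (G f)) :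
    LCmap (fun x => G (q x) x) := by
  intro s
  have : (fun x => G (q x) x) ⁻¹' s = ⋃ f : F, (q ⁻¹' {f} ∩ (G f) ⁻¹' s) := by ext x; simp
  rw [this]; exact isOpen_iUnion fun f => (hq {f}).inter (hG f s)

variable [CompactSpace X] [T2Space X] [TotallyDisconnectedSpace X] [PerfectSpace X]

theorem exists_clopen_split {U : Set X} (hU : IsClopen U) (hne : U.Nonempty) :
    ∃ A B : Set X, IsClopen A ∧ IsClopen B ∧ A.Nonempty ∧ B.Nonempty ∧
      Disjoint A B ∧ A ∪ B = U := by
  obtain ⟨x, hx⟩ := hne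
  have hnhds : U ∈ nhds x := hU.isOpen.mem_nhds hx
  obtain ⟨y, ⟨hyU, -⟩, hyx⟩ :=
    preperfect_iff_nhds.mp (PerfectSpace.univ_preperfect) x (mem_univ x) U hnhds
  obtain ⟨V, hV, hxV, hVsub⟩ := compact_exists_isClopen_in_isOpen
    (hU.isOpen.inter isOpen_compl_singleton) ⟨hx, fun h => hyx (h.symm)⟩
  refine ⟨V, U \ V, hV, hU.diff hV, ⟨x, hxV⟩, ⟨y, hyU, fun h => (hVsub h).2 rfl⟩,
    disjoint_sdiff_right.mono_left le_rfl, ?_⟩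
  rw [Set.union_diff_cancel (fun z hz => (hVsub hz).1)]

end Aux

section Metric
variable {X : Type*} [MetricSpace X] [CompactSpace X]
  [TotallyDisconnectedSpace X] [PerfectSpace X]

/-- One can refine a partition of `U` into `m` nonempty pieces into `m+1` pieces. -/
theorem partition_succ {U : Set X} (hU : IsClopen U) {δ : ℝ} {m : ℕ} (hm : 0 < m)
    {d : X → Fin m} (hd : LCmap d) (hsurj : ∀ i, ∃ x ∈ U, d x = i)
    (hdiam : ∀ x ∈ U, ∀ y ∈ U, d x = d y → dist x y ≤ δ) :
    ∃ d' : X → Fin (m + 1), LCmap d' ∧ (∀ i, ∃ x ∈ U, d' x = i) ∧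
      ∀ x ∈ U, ∀ y ∈ U, d' x = d' y → dist x y ≤ δ := by
  set i₀ : Fin m := ⟨0, hm⟩
  have hV : IsClopen (U ∩ d ⁻¹' {i₀}) := hU.inter (hd.isClopen {i₀})
  obtain ⟨x₀, hx₀U, hx₀⟩ := hsurj i₀
  obtain ⟨A, B, hA, hB, hAne, hBne, hABdisj, hABun⟩ :=
    exists_clopen_split hV ⟨x₀, hx₀U, hx₀⟩
  have hAV : A ⊆ U ∩ d ⁻¹' {i₀} := hABun ▸ subset_union_left
  have hBV : B ⊆ U ∩ d ⁻¹' {i₀} := hABun ▸ subset_union_right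
  classical
  refine ⟨fun x => if x ∈ A then Fin.last m else (d x).castSucc, ?_, ?_, ?_⟩
  · refine lcmap_of_fibers fun v => ?_
    have : (fun x => if x ∈ A then Fin.last m else (d x).castSucc) ⁻¹' {v} =
        (A ∩ (fun _ : X => Fin.last m) ⁻¹' {v}) ∪ (Aᶜ ∩ (fun x => (d x).castSucc) ⁻¹' {v}) := by
      ext x; by_cases hxA : x ∈ A <;> simp [hxA]
    rw [this]
    exact ((hA.isOpen.inter (by by_cases h : Fin.last m = v <;> simp [h, isOpen_univ])).union
      (hA.compl.isOpen.inter ((hd.comp Fin.castSucc) {v})))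
  · intro i
    refine Fin.lastCases ?_ (fun i => ?_) i
    · obtain ⟨a, ha⟩ := hAne
      exact ⟨a, (hAV ha).1, if_pos ha⟩
    · by_cases hi : i = i₀
      · obtain ⟨b, hb⟩ := hBne
        have hbA : b ∉ A := fun h => hABdisj.ne_of_mem h hb rfl
        refine ⟨b, (hBV hb).1, ?_⟩
        dsimp only
        rw [if_neg hbA, hi]
        exact congrArg Fin.castSucc (hBV hb).2
      · obtain ⟨x, hxU, hxd⟩ := hsurj i
        have hxA : x ∉ A := fun h => hi (hxd ▸ (hAV h).2)
        exact ⟨x, hxU, by dsimp only; rw [if_neg hxA, hxd]⟩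
  · intro x hxU y hyU hxy
    dsimp only at hxy
    by_cases hxA : x ∈ A <;> by_cases hyA : y ∈ A
    · exact hdiam x hxU y hyU ((hAV hxA).2.trans ((hAV hyA).2).symm)
    · rw [if_pos hxA, if_neg hyA] at hxy
      exact absurd hxy.symm (Fin.castSucc_lt_last (d y)).ne
    · rw [if_neg hxA, if_pos hyA] at hxy
      exact absurd hxy (Fin.castSucc_lt_last (d x)).ne
    · rw [if_neg hxA, if_neg hyA] at hxy
      exact hdiam x hxU y hyU (Fin.castSucc_injective m hxy)
end Metric

section
variable {X : Type*} [MetricSpace X] [CompactSpace X]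
  [TotallyDisconnectedSpace X] [PerfectSpace X]

theorem exists_fine_partition {U : Set X} (hU : IsClopen U) (hne : U.Nonempty)
    {δ : ℝ} (hδ : 0 < δ) :
    ∃ m₀ : ℕ, 0 < m₀ ∧ ∀ m, m₀ ≤ m → ∃ d : X → Fin m, LCmap d ∧
      (∀ i, ∃ x ∈ U, d x = i) ∧ ∀ x ∈ U, ∀ y ∈ U, d x = d y → dist x y ≤ δ := by
  classical
  have hW : ∀ x : X, ∃ V : Set X, IsClopen V ∧ x ∈ V ∧ V ⊆ Metric.ball x (δ / 2) :=
    fun x => compact_exists_isClopen_in_isOpen Metric.isOpen_ball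
      (Metric.mem_ball_self (by linarith))
  choose W hWc hWx hWb using hW
  obtain ⟨t, ht⟩ := isCompact_univ.elim_finite_subcover W (fun x => (hWc x).isOpen)
    (fun x _ => mem_iUnion.2 ⟨x, hWx x⟩)
  set N := t.card with hN
  set e : Fin N → X := fun i => (t.equivFin.symm i : X) with he
  set S : X → Finset (Fin N) := fun x => Finset.univ.filter (fun i => x ∈ W (e i)) with hS
  have hSne : ∀ x, (S x).Nonempty := by
    intro x
    obtain ⟨y, hy⟩ := mem_iUnion.1 (ht (mem_univ x))
    obtain ⟨hyt, hyW⟩ := by simpa using hy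
    refine ⟨t.equivFin ⟨y, hyt⟩, ?_⟩
    simp only [hS, Finset.mem_filter, Finset.mem_univ, true_and, he]
    rwa [Equiv.symm_apply_apply]
  set d₀ : X → Fin N := fun x => (S x).min' (hSne x) with hd₀
  have hd₀W : ∀ x, x ∈ W (e (d₀ x)) := by
    intro x
    have := (S x).min'_mem (hSne x)
    simpa [hS] using this
  have hlc₀ : LCmap d₀ := by
    refine lcmap_of_fibers fun i => ?_
    have heq : d₀ ⁻¹' {i} =
        W (e i) ∩ ⋂ j : Fin N, {x | j < i → x ∉ W (e j)} := by
      ext x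
      simp only [mem_preimage, mem_singleton_iff, mem_inter_iff, mem_iInter, mem_setOf_eq]
      constructor
      · rintro rfl
        refine ⟨hd₀W x, fun j hj hxj => ?_⟩
        have hjS : j ∈ S x := by simp [hS, hxj]
        exact absurd ((S x).min'_le j hjS) (not_le.mpr hj)
      · rintro ⟨hxi, hj⟩
        have hiS : i ∈ S x := by simp [hS, hxi]
        refine le_antisymm ((S x).min'_le i hiS) ?_
        refine Finset.le_min' _ _ _ fun j hjS => ?_
        by_contra hji
        exact hj j (not_le.1 hji) (by simpa [hS] using hjS)
    rw [heq]
    refine (hWc (e i)).isOpen.inter (isOpen_iInter_of_finite fun j => ?_)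
    by_cases hj : j < i
    · simp only [hj, forall_true_left]
      exact isOpen_compl_iff.mpr (hWc (e j)).isClosed
    · have : {x : X | j < i → x ∉ W (e j)} = univ := by
        ext x; simp [hj]
      rw [this]; exact isOpen_univ
  set T : Finset (Fin N) := Finset.univ.filter (fun i => ∃ x ∈ U, d₀ x = i) with hT
  have hTne : T.Nonempty := by
    obtain ⟨x, hx⟩ := hne
    exact ⟨d₀ x, by simp [hT]; exact ⟨x, hx, rfl⟩⟩
  obtain ⟨i₁, hi₁⟩ := hTne
  set m₀ := T.card with hm₀
  have hm₀pos : 0 < m₀ := Finset.card_pos.mpr ⟨i₁, hi₁⟩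
  set ρ : Fin N → Fin m₀ := fun i => if h : i ∈ T then T.equivFin ⟨i, h⟩ else T.equivFin ⟨i₁, hi₁⟩
    with hρ
  have base : ∃ d : X → Fin m₀, LCmap d ∧ (∀ i, ∃ x ∈ U, d x = i) ∧
      ∀ x ∈ U, ∀ y ∈ U, d x = d y → dist x y ≤ δ := by
    refine ⟨ρ ∘ d₀, hlc₀.comp ρ, ?_, ?_⟩
    · intro k
      obtain ⟨⟨i, hiT⟩, hik⟩ : ∃ p : {x // x ∈ T}, T.equivFin p = k :=
        ⟨T.equivFin.symm k, T.equivFin.apply_symm_apply k⟩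
      obtain ⟨x, hxU, hxd⟩ : ∃ x ∈ U, d₀ x = i := by simpa [hT] using hiT
      refine ⟨x, hxU, ?_⟩
      simp only [Function.comp_apply, hρ, hxd, dif_pos hiT]
      exact hik
    · intro x hxU y hyU hxy
      have hxT : d₀ x ∈ T := by simp [hT]; exact ⟨x, hxU, rfl⟩
      have hyT : d₀ y ∈ T := by simp [hT]; exact ⟨y, hyU, rfl⟩
      have : d₀ x = d₀ y := by
        have := hxy
        simp only [Function.comp_apply, hρ, dif_pos hxT, dif_pos hyT] at this
        exact congrArg Subtype.val (T.equivFin.injective this)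
      have hx' : x ∈ Metric.ball (e (d₀ x)) (δ / 2) := hWb _ (hd₀W x)
      have hy' : y ∈ Metric.ball (e (d₀ x)) (δ / 2) := this ▸ hWb _ (hd₀W y)
      have h1 : dist x (e (d₀ x)) < δ / 2 := Metric.mem_ball.1 hx'
      have h2 : dist y (e (d₀ x)) < δ / 2 := Metric.mem_ball.1 hy'
      calc dist x y ≤ dist x (e (d₀ x)) + dist (e (d₀ x)) y := dist_triangle _ _ _
        _ = dist x (e (d₀ x)) + dist y (e (d₀ x)) := by rw [dist_comm (e (d₀ x)) y]
        _ ≤ δ := by linarith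
  refine ⟨m₀, hm₀pos, ?_⟩
  intro m hm
  induction m, hm using Nat.le_induction with
  | base => exact base
  | succ n hn ih =>
    obtain ⟨d, hd, hsurj, hdiam⟩ := ih
    exact partition_succ hU (lt_of_lt_of_le hm₀pos hn) hd hsurj hdiam
end

theorem lcmap_const {X E : Type*} [TopologicalSpace X] (e : E) : LCmap (fun _ : X => e) := by
  intro s
  by_cases h : e ∈ s <;> simp [Set.preimage_const, h]

section Step
variable {X : Type*} [MetricSpace X] [CompactSpace X]
  [TotallyDisconnectedSpace X] [PerfectSpace X]

theorem coloring_step (n : ℕ) (c : X → ℕ → Bool) (hc : ∀ i, LCmap fun x => c x i)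
    (hsurj : ∀ w : ℕ → Bool, ∃ x, ∀ i < n, c x i = w i) {δ : ℝ} (hδ : 0 < δ) :
    ∃ (n' : ℕ) (c' : X → ℕ → Bool), n < n' ∧ (∀ i, LCmap fun x => c' x i) ∧
      (∀ w : ℕ → Bool, ∃ x, ∀ i < n', c' x i = w i) ∧
      (∀ x y, (∀ i < n', c' x i = c' y i) → dist x y ≤ δ) ∧
      (∀ x, ∀ i < n, c' x i = c x i) := by
  classical
  set chat : X → (Fin n → Bool) := fun x i => c x (i : ℕ) with hchatdef
  have hchat : LCmap chat := by
    refine lcmap_of_fibers fun w => ?_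
    have : chat ⁻¹' {w} = ⋂ i : Fin n, (fun x => c x (i : ℕ)) ⁻¹' {w i} := by
      ext x
      simp [hchatdef, funext_iff]
    rw [this]
    exact isOpen_iInter_of_finite fun i => hc i {w i}
  have hUne : ∀ w : Fin n → Bool, (chat ⁻¹' {w}).Nonempty := by
    intro w
    obtain ⟨x, hx⟩ := hsurj (fun i => if h : i < n then w ⟨i, h⟩ else false)
    refine ⟨x, ?_⟩
    simp only [mem_preimage, mem_singleton_iff]
    funext i
    simpa [i.2] using hx i i.2
  choose m₀ hm₀pos hm₀ using fun w : Fin n → Bool =>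
    exists_fine_partition (hchat.isClopen {w}) (hUne w) hδ
  set j : ℕ := max 1 (Finset.univ.sup m₀) with hj
  have hjle : ∀ w, m₀ w ≤ 2 ^ j :=
    fun w => le_trans (le_trans (Finset.le_sup (Finset.mem_univ w)) (le_max_right _ _))
      (Nat.lt_two_pow_self (n := j)).le
  choose d hdlc hdsurj hddiam using fun w : Fin n → Bool => hm₀ w (2 ^ j) (hjle w)
  set eb : (Fin j → Bool) ≃ Fin (2 ^ j) :=
    (Equiv.arrowCongr (Equiv.refl (Fin j)) finTwoEquiv.symm).trans finFunctionFinEquiv with heb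
  refine ⟨n + j, fun x i => if hi : i < n then c x i else
    (if h : i - n < j then eb.symm (d (chat x) x) ⟨i - n, h⟩ else false), ?_, ?_, ?_, ?_, ?_⟩
  · have : 1 ≤ j := le_max_left _ _
    omega
  · intro i
    by_cases hi : i < n
    · simpa [hi] using hc i
    · by_cases hij : i - n < j
      · simp only [hi, hij, dif_neg, dif_pos, dite_false, dite_true]
        have : (fun x => (if h : i - n < j then eb.symm (d (chat x) x) ⟨i - n, h⟩ else false))
            = fun x => eb.symm (d (chat x) x) ⟨i - n, hij⟩ := by
          funext x; simp [hij]
        refine LCmap.glue hchat (G := fun w x => eb.symm (d w x) ⟨i - n, hij⟩) fun w => ?_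
        exact (hdlc w).comp (fun v => eb.symm v ⟨i - n, hij⟩)
      · simpa [hi, hij] using lcmap_const (X := X) false
  · intro w
    obtain ⟨x, hxU, hxd⟩ := hdsurj (fun i => w i) (eb (fun t => w (n + (t : ℕ))))
    have hchatx : chat x = fun i : Fin n => w (i : ℕ) := hxU
    refine ⟨x, fun i hi => ?_⟩
    by_cases hin : i < n
    · simpa [hin] using congrFun hchatx ⟨i, hin⟩
    · have hij : i - n < j := by omega
      simp only [hin, hij, dite_true, dite_false, dif_pos, dif_neg]
      rw [hchatx, hxd, Equiv.symm_apply_apply]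
      simp only []
      congr 1
      omega
  · intro x y hxy
    have hchateq : chat x = chat y := by
      funext i
      simpa [hchatdef, Nat.lt_of_lt_of_le i.2 (Nat.le_add_right n j)] using
        hxy (i : ℕ) (Nat.lt_of_lt_of_le i.2 (Nat.le_add_right n j))
    have hbits : d (chat x) x = d (chat x) y := by
      have : ∀ t : Fin j, eb.symm (d (chat x) x) t = eb.symm (d (chat x) y) t := by
        intro t
        have h1 := hxy (n + (t : ℕ)) (by omega)
        have hin : ¬ (n + (t : ℕ) < n) := by omega
        have hij : n + (t : ℕ) - n < j := by omega
        simp only [hin, hij, dite_true, dite_false, dif_pos, dif_neg, hchateq] at h1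
        convert h1 using 3 <;> [skip; skip] <;> · congr 1 <;> omega
      have := funext this
      exact eb.symm.injective this
    have hyU : chat y ∈ ({chat x} : Set (Fin n → Bool)) := by simp [hchateq]
    exact hddiam (chat x) x rfl y (by simpa using hchateq.symm) hbits
  · intro x i hi
    simp [hi]

variable (X) in
/-- A state in the inductive construction: a coloring of `X` by finitely many digits,
locally constant, realizing every word. -/
def BState : Type _ := Σ' (n : ℕ) (c : X → ℕ → Bool),
  (∀ i, LCmap fun x => c x i) ∧ (∀ w : ℕ → Bool, ∃ x, ∀ i < n, c x i = w i)

theorem bstate_step (S : BState X) {δ : ℝ} (hδ : 0 < δ) :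
    ∃ T : BState X, S.1 < T.1 ∧ (∀ x i, i < S.1 → T.2.1 x i = S.2.1 x i) ∧
      (∀ x y, (∀ i < T.1, T.2.1 x i = T.2.1 y i) → dist x y ≤ δ) := by
  obtain ⟨n, c, hc, hsurj⟩ := S
  obtain ⟨n', c', hlt, hlc, hsurj', hdiam, hext⟩ := coloring_step n c hc hsurj hδ
  exact ⟨⟨n', c', hlc, hsurj'⟩, hlt, fun x i hi => hext x i hi, hdiam⟩

variable [Nonempty X]

noncomputable def bseq : ℕ → BState X
  | 0 => ⟨0, fun _ _ => false, fun _ => lcmap_const false,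
      fun _ => ⟨Classical.arbitrary X, fun i hi => absurd hi (Nat.not_lt_zero i)⟩⟩
  | (k + 1) => (bstate_step (X := X) (bseq k)
      (δ := 1 / (k + 1)) (by positivity)).choose

theorem bseq_spec (k : ℕ) :
    (bseq (X := X) k).1 < (bseq (X := X) (k + 1)).1 ∧
      (∀ x i, i < (bseq (X := X) k).1 →
        (bseq (X := X) (k + 1)).2.1 x i = (bseq (X := X) k).2.1 x i) ∧
      (∀ x y, (∀ i < (bseq (X := X) (k + 1)).1,
          (bseq (X := X) (k + 1)).2.1 x i = (bseq (X := X) (k + 1)).2.1 y i) →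
        dist x y ≤ 1 / (k + 1)) := by
  have h := (bstate_step (X := X) (bseq k) (δ := 1 / (k + 1)) (by positivity)).choose_spec
  exact h

theorem bseq_mono : ∀ k l : ℕ, k ≤ l → (bseq (X := X) k).1 ≤ (bseq (X := X) l).1 := by
  intro k l hkl
  induction l, hkl using Nat.le_induction with
  | base => exact le_rfl
  | succ m hm ih => exact le_trans ih (bseq_spec m).1.le

theorem bseq_ge (k : ℕ) : k ≤ (bseq (X := X) k).1 := by
  induction k with
  | zero => exact Nat.zero_le _
  | succ m ih => exact Nat.succ_le_of_lt (lt_of_le_of_lt ih (bseq_spec m).1)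

theorem bseq_consistent : ∀ k l : ℕ, k ≤ l → ∀ x (i : ℕ), i < (bseq (X := X) k).1 →
    (bseq (X := X) l).2.1 x i = (bseq (X := X) k).2.1 x i := by
  intro k l hkl
  induction l, hkl using Nat.le_induction with
  | base => intro x i _; rfl
  | succ m hm ih =>
    intro x i hi
    rw [(bseq_spec m).2.1 x i (lt_of_lt_of_le hi (bseq_mono k m hm)), ih x i hi]

/-- Brouwer: a nonempty compact metric totally disconnected perfect space is
homeomorphic to the Cantor space `ℕ → Bool`. -/
theorem exists_homeo_cantor : Nonempty (X ≃ₜ (ℕ → Bool)) := by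
  classical
  set D : X → ℕ → Bool := fun x i => (bseq (X := X) (i + 1)).2.1 x i with hD
  have hDc : Continuous D := by
    refine continuous_pi fun i => ?_
    exact ((bseq (X := X) (i + 1)).2.2.1 i).continuous
  have hagree : ∀ (k : ℕ) x (i : ℕ), i < (bseq (X := X) (k + 1)).1 →
      (bseq (X := X) (k + 1)).2.1 x i = D x i := by
    intro k x i hi
    rcases le_total (i + 1) (k + 1) with h | h
    · exact (bseq_consistent (i + 1) (k + 1) h x i
        (lt_of_lt_of_le (Nat.lt_succ_self i) (bseq_ge (i + 1))))
    · exact (bseq_consistent (k + 1) (i + 1) h x i hi).symm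
  have hinj : Function.Injective D := by
    intro x y hxy
    have hle : ∀ k : ℕ, dist x y ≤ 1 / ((k : ℝ) + 1) := by
      intro k
      refine (bseq_spec k).2.2 x y fun i hi => ?_
      rw [hagree k x i hi, hagree k y i hi, hxy]
    by_contra hne
    have hpos : 0 < dist x y := dist_pos.mpr fun h => hne (h ▸ rfl)
    obtain ⟨k, hk⟩ := exists_nat_one_div_lt hpos
    exact absurd (hle k) (not_le.mpr hk)
  have hsurj : Function.Surjective D := by
    intro w
    set A : ℕ → Set X := fun k => {x | ∀ i < (bseq (X := X) k).1, (bseq (X := X) k).2.1 x i = w i}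
      with hA
    have hAcl : ∀ k, IsClosed (A k) := by
      intro k
      have : A k = ⋂ i : ℕ, {x | i < (bseq (X := X) k).1 → (bseq (X := X) k).2.1 x i = w i} := by
        ext x; simp [hA]
      rw [this]
      refine isClosed_iInter fun i => ?_
      by_cases hi : i < (bseq (X := X) k).1
      · have : {x : X | i < (bseq (X := X) k).1 → (bseq (X := X) k).2.1 x i = w i} =
            (fun x => (bseq (X := X) k).2.1 x i) ⁻¹' {w i} := by
          ext x; simp [hi]
        rw [this]
        exact (((bseq (X := X) k).2.2.1 i).isClopen {w i}).isClosed
      · have : {x : X | i < (bseq (X := X) k).1 → (bseq (X := X) k).2.1 x i = w i} = univ := by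
          ext x; simp [hi]
        rw [this]; exact isClosed_univ
    have hAne : ∀ k, (A k).Nonempty := fun k => (bseq (X := X) k).2.2.2 w
    have hAsub : ∀ k, A (k + 1) ⊆ A k := by
      intro k x hx i hi
      rw [← bseq_consistent k (k + 1) (Nat.le_succ k) x i hi]
      exact hx i (lt_of_lt_of_le hi (bseq_mono k (k + 1) (Nat.le_succ k)))
    obtain ⟨x, hx⟩ := IsCompact.nonempty_iInter_of_sequence_nonempty_isCompact_isClosed
      A hAsub hAne (isCompact_univ.of_isClosed_subset (hAcl 0) (subset_univ _)) hAcl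
    refine ⟨x, funext fun i => ?_⟩
    have hxi := mem_iInter.1 hx (i + 1)
    exact hxi i (lt_of_lt_of_le (Nat.lt_succ_self i) (bseq_ge (i + 1)))
  exact ⟨Continuous.homeoOfEquivCompactToT2 (f := Equiv.ofBijective D ⟨hinj, hsurj⟩) hDc⟩

end Step

section Shuffle

/-- The shuffle homeomorphism of the Cantor space: splits off a second Cantor factor while
keeping the first `n` coordinates of the first factor. -/
noncomputable def cantorShuffle (n : ℕ) : (ℕ → Bool) ≃ₜ (ℕ → Bool) × (ℕ → Bool) := by
  classical
  refine Homeomorph.mk ⟨fun x => (fun i => if i < n then x i else x (n + 2 * (i - n)),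
      fun k => x (n + 2 * k + 1)),
    fun yz => fun i => if i < n then yz.1 i else
      if (i - n) % 2 = 0 then yz.1 (n + (i - n) / 2) else yz.2 ((i - n) / 2), ?_, ?_⟩ ?_ ?_
  · intro x
    funext i
    by_cases hi : i < n
    · simp [hi]
    · simp only [hi, if_false]
      by_cases he : (i - n) % 2 = 0
      · simp only [he, if_true]
        have h2 : ¬ (n + (i - n) / 2 < n) := by omega
        simp only [h2, if_false]
        congr 1
        omega
      · simp only [he, if_false]
        congr 1
        omega
  · intro yz
    refine Prod.ext ?_ ?_
    · funext i
      by_cases hi : i < n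
      · simp [hi]
      · simp only [hi, if_false]
        have h1 : ¬ (n + 2 * (i - n) < n) := by omega
        have h2 : (n + 2 * (i - n) - n) % 2 = 0 := by omega
        simp only [h1, h2, if_false, if_true]
        rw [show n + (n + 2 * (i - n) - n) / 2 = i from by omega]
    · funext k
      have h1 : ¬ (n + 2 * k + 1 < n) := by omega
      have h2 : ¬ ((n + 2 * k + 1 - n) % 2 = 0) := by omega
      simp only [h1, h2, if_false]
      rw [show (n + 2 * k + 1 - n) / 2 = k from by omega]
  · refine Continuous.prodMk (continuous_pi fun i => ?_) (continuous_pi fun k => ?_)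
    · by_cases hi : i < n
      · simpa [hi] using continuous_apply i
      · simpa [hi] using continuous_apply (n + 2 * (i - n))
    · exact continuous_apply (n + 2 * k + 1)
  · refine continuous_pi fun i => ?_
    by_cases hi : i < n
    · simpa [hi, Function.comp_def] using (continuous_apply i).comp continuous_fst
    · by_cases he : (i - n) % 2 = 0
      · simpa [hi, he, Function.comp_def] using (continuous_apply (n + (i - n) / 2)).comp continuous_fst
      · simpa [hi, he, Function.comp_def] using (continuous_apply ((i - n) / 2)).comp continuous_snd

theorem cantorShuffle_fst (n : ℕ) (x : ℕ → Bool) (i : ℕ) (hi : i < n) :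
    ((cantorShuffle n) x).1 i = x i := by
  simp [cantorShuffle, hi]

end Shuffle

section Small
variable {X : Type*} [MetricSpace X] [CompactSpace X]

theorem cantor_uniform (g : X ≃ₜ (ℕ → Bool)) {δ : ℝ} (hδ : 0 < δ) :
    ∃ n : ℕ, ∀ p q : ℕ → Bool, (∀ i < n, p i = q i) →
      dist (g.symm p) (g.symm q) < δ := by
  classical
  set K : Set ((ℕ → Bool) × (ℕ → Bool)) :=
    {pq | δ ≤ dist (g.symm pq.1) (g.symm pq.2)} with hK
  have hKcl : IsClosed K := by
    have hc : Continuous fun pq : (ℕ → Bool) × (ℕ → Bool) =>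
        dist (g.symm pq.1) (g.symm pq.2) :=
      Continuous.dist (g.symm.continuous.comp continuous_fst)
        (g.symm.continuous.comp continuous_snd)
    exact isClosed_le continuous_const hc
  have hKcomp : IsCompact K := hKcl.isCompact
  set V : ℕ → Set ((ℕ → Bool) × (ℕ → Bool)) := fun i => {pq | ¬ pq.1 i = pq.2 i} with hV
  have hVopen : ∀ i, IsOpen (V i) := by
    intro i
    have : IsClosed {pq : (ℕ → Bool) × (ℕ → Bool) | pq.1 i = pq.2 i} :=
      isClosed_eq ((continuous_apply i).comp continuous_fst)
        ((continuous_apply i).comp continuous_snd)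
    exact isOpen_compl_iff.mpr this
  have hcover : K ⊆ ⋃ i : ℕ, V i := by
    rintro ⟨p, q⟩ hpq
    have hne : p ≠ q := by
      rintro rfl
      simp only [hK, mem_setOf_eq, dist_self] at hpq
      linarith
    obtain ⟨i, hi⟩ := Function.ne_iff.mp hne
    exact mem_iUnion.2 ⟨i, hi⟩
  obtain ⟨t, ht⟩ := hKcomp.elim_finite_subcover V hVopen hcover
  refine ⟨(t.sup id) + 1, fun p q hpq => ?_⟩
  by_contra hge
  have hmem : (p, q) ∈ K := by simpa [hK] using not_lt.1 hge
  obtain ⟨i, hit, hiV⟩ := by simpa using ht hmem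
  exact hiV (hpq i (Nat.lt_succ_of_le (le_trans (Finset.le_sup (f := id) hit) le_rfl)))

variable [TotallyDisconnectedSpace X] [PerfectSpace X] [Nonempty X]

theorem exists_small_selfprod_homeo {δ : ℝ} (hδ : 0 < δ) :
    ∃ h : X ≃ₜ X × X, ∀ x, dist x (h x).1 < δ := by
  obtain ⟨g⟩ := exists_homeo_cantor (X := X)
  obtain ⟨n, hn⟩ := cantor_uniform g hδ
  refine ⟨g.trans ((cantorShuffle n).trans (g.symm.prodCongr g.symm)), fun x => ?_⟩
  have h1 : dist (g.symm (g x)) (g.symm (((cantorShuffle n) (g x)).1)) < δ :=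
    hn _ _ (fun i hi => (cantorShuffle_fst n (g x) i hi).symm)
  simpa [Homeomorph.trans_apply, Homeomorph.symm_apply_apply] using h1
end Small

end Brouwer

section Construction
open Set

@[simp] theorem homeo_mul_apply {X : Type*} [TopologicalSpace X] (f g : X ≃ₜ X) (x : X) :
    (f * g) x = f (g x) := rfl

theorem homeo_inv_eq_symm {X : Type*} [TopologicalSpace X] (f : X ≃ₜ X) : f⁻¹ = f.symm := rfl

theorem monoidHom_symm_eq {Γ X : Type*} [Group Γ] [TopologicalSpace X]
    (g : Γ →* (X ≃ₜ X)) (s : Γ) : (g s).symm = g s⁻¹ := by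
  rw [map_inv]; rfl

variable {Γ X : Type*} [Group Γ] [MetricSpace X] [CompactSpace X]
  [TotallyDisconnectedSpace X] [PerfectSpace X] [Nonempty X]

/-- The key construction: an extension of `α` that is pointwise `ε`-close to `β`
on a prescribed finite set of group elements. -/
theorem exists_extension_close (α β : Γ →* (X ≃ₜ X)) (J : Finset Γ) {ε : ℝ} (hε : 0 < ε) :
    ∃ γ : Γ →* (X ≃ₜ X),
      (∃ π : X → X, Continuous π ∧ Function.Surjective π ∧
        ∀ (s : Γ) (x : X), π (γ s x) = α s (π x)) ∧
      ∀ s ∈ J, ∀ x : X, dist (γ s x) (β s x) < ε := by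
  classical
  -- uniform continuity moduli
  have hmod : ∀ s : Γ, ∃ d : ℝ, 0 < d ∧ ∀ a b : X, dist a b < d →
      dist (β s a) (β s b) < ε / 2 := by
    intro s
    have huc : UniformContinuous (β s) :=
      CompactSpace.uniformContinuous_of_continuous (β s).continuous
    obtain ⟨d, hd, hduc⟩ := Metric.uniformContinuous_iff.1 huc (ε / 2) (by linarith)
    exact ⟨d, hd, fun a b hab => hduc hab⟩
  choose d hdpos hd using hmod
  set Q : Finset ℝ := insert (ε / 2) (J.image d) with hQ
  have hQne : Q.Nonempty := ⟨ε / 2, Finset.mem_insert_self _ _⟩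
  set δ : ℝ := Q.min' hQne with hδdef
  have hδpos : 0 < δ := by
    rw [hδdef, Finset.lt_min'_iff]
    intro y hy
    rcases Finset.mem_insert.1 hy with h | h
    · rw [h]; linarith
    · obtain ⟨s, _, hs⟩ := Finset.mem_image.1 h
      rw [← hs]; exact hdpos s
  have hδle : δ ≤ ε / 2 := Q.min'_le _ (Finset.mem_insert_self _ _)
  have hδd : ∀ s ∈ J, δ ≤ d s := fun s hs =>
    Q.min'_le _ (Finset.mem_insert_of_mem (Finset.mem_image_of_mem d hs))
  obtain ⟨h, hsmall⟩ := exists_small_selfprod_homeo (X := X) hδpos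
  -- the perturbed action
  set γ : Γ →* (X ≃ₜ X) := MonoidHom.mk'
    (fun s => h.trans (((β s).prodCongr (α s)).trans h.symm)) (by
      intro a b
      refine Homeomorph.ext fun x => ?_
      simp only [homeo_mul_apply, Homeomorph.trans_apply, Homeomorph.coe_prodCongr,
        Homeomorph.apply_symm_apply]
      congr 1
      obtain ⟨u, v⟩ := h x
      simp [Homeomorph.coe_prodCongr, map_mul]) with hγ
  have hγapp : ∀ (s : Γ) (x : X), γ s x = h.symm (β s (h x).1, α s (h x).2) := by
    intro s x
    simp [hγ, MonoidHom.mk'_apply, Homeomorph.trans_apply, Homeomorph.coe_prodCongr, Prod.map]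
  refine ⟨γ, ⟨fun x => (h x).2, continuous_snd.comp h.continuous, ?_, ?_⟩, ?_⟩
  · intro y
    obtain ⟨x₀⟩ := (inferInstance : Nonempty X)
    exact ⟨h.symm (x₀, y), by simp [Homeomorph.apply_symm_apply]⟩
  · intro s x
    rw [hγapp]
    simp [Homeomorph.apply_symm_apply]
  · intro s hs x
    set p : X × X := (β s (h x).1, α s (h x).2) with hp
    have a1 : dist (h.symm p) p.1 < δ := by
      have := hsmall (h.symm p)
      rwa [Homeomorph.apply_symm_apply] at this
    have a2 : dist (β s (h x).1) (β s x) < ε / 2 := by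
      refine hd s _ _ ?_
      refine lt_of_lt_of_le ?_ (hδd s hs)
      rw [dist_comm]
      exact hsmall x
    calc dist (γ s x) (β s x) ≤ dist (γ s x) (β s (h x).1) + dist (β s (h x).1) (β s x) :=
          dist_triangle _ _ _
      _ < δ + ε / 2 := by
          refine add_lt_add_of_lt_of_lt ?_ a2
          rw [hγapp]
          exact a1
      _ ≤ ε := by linarith
end Construction

/-- For a countable group `Γ` and a Cantor system `α ∈ S(Γ, X)`, the set of
extensions of `α` (actions `β` admitting a `Γ`-equivariant continuous surjection
`π : X → X` onto `α`) is dense in `S(Γ, X)`. -/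
theorem extensions_dense (Γ X : Type*) [Group Γ] [Countable Γ]
    [TopologicalSpace X] [CompactSpace X] [MetrizableSpace X]
    [TotallyDisconnectedSpace X] [PerfectSpace X] [Nonempty X]
    (α : Γ →* (X ≃ₜ X)) :
    Dense {β : Γ →* (X ≃ₜ X) | ∃ π : X → X, Continuous π ∧ Function.Surjective π ∧
      ∀ (s : Γ) (x : X), π (β s x) = α s (π x)} := by

  classical
  letI : MetricSpace X := TopologicalSpace.metrizableSpaceMetric X
  intro β
  rw [mem_closure_iff_nhds]
  intro U hU
  -- Unfold the topology on the action space.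
  have hU' : U ∈ Filter.comap (fun g : Γ →* (X ≃ₜ X) => (g : Γ → X ≃ₜ X))
      (nhds (β : Γ → X ≃ₜ X)) := by
    rw [← nhds_induced]; exact hU
  obtain ⟨V, hV, hVsub⟩ := Filter.mem_comap.1 hU'
  rw [nhds_pi] at hV
  obtain ⟨I, hIfin, W, hW, hWsub⟩ := Filter.mem_pi.1 hV
  set j : (X ≃ₜ X) → C(X, X) × C(X, X) := fun φ => ((φ : C(X, X)), (φ.symm : C(X, X)))
    with hj
  have hW' : ∀ s, W s ∈ Filter.comap j (nhds (j (β s))) := by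
    intro s
    rw [← nhds_induced]; exact hW s
  choose Z hZ hZsub using fun s => Filter.mem_comap.1 (hW' s)
  have hball : ∀ s, ∃ e : ℝ, 0 < e ∧ Metric.ball (j (β s)) e ⊆ Z s := by
    intro s
    obtain ⟨e, he, hb⟩ := Metric.mem_nhds_iff.1 (hZ s)
    exact ⟨e, he, hb⟩
  choose e hepos heball using hball
  set J : Finset Γ := hIfin.toFinset with hJ
  set Qe : Finset ℝ := insert 1 (J.image e) with hQe
  have hQene : Qe.Nonempty := ⟨1, Finset.mem_insert_self _ _⟩
  set ε : ℝ := Qe.min' hQene with hε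
  have hεpos : 0 < ε := by
    rw [hε, Finset.lt_min'_iff]
    intro y hy
    rcases Finset.mem_insert.1 hy with h | h
    · rw [h]; norm_num
    · obtain ⟨s, _, hs⟩ := Finset.mem_image.1 h
      rw [← hs]; exact hepos s
  have hεe : ∀ s ∈ J, ε ≤ e s := fun s hs =>
    Qe.min'_le _ (Finset.mem_insert_of_mem (Finset.mem_image_of_mem e hs))
  set J' : Finset Γ := J ∪ J.image (·⁻¹) with hJ'
  obtain ⟨γ, hext, hclose⟩ := exists_extension_close α β J' hεpos
  have hcloseC : ∀ s ∈ J, dist (γ s : C(X, X)) (β s : C(X, X)) < ε ∧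
      dist ((γ s).symm : C(X, X)) ((β s).symm : C(X, X)) < ε := by
    intro s hs
    constructor
    · rw [ContinuousMap.dist_lt_iff hεpos]
      intro x
      exact hclose s (Finset.mem_union_left _ hs) x
    · rw [monoidHom_symm_eq γ, monoidHom_symm_eq β, ContinuousMap.dist_lt_iff hεpos]
      intro x
      exact hclose s⁻¹ (Finset.mem_union_right _ (Finset.mem_image_of_mem _ hs)) x
  refine ⟨γ, ?_, hext⟩
  apply hVsub
  apply hWsub
  rw [Set.mem_pi]
  intro s hsI
  apply hZsub
  have hsJ : s ∈ J := hIfin.mem_toFinset.2 hsI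
  apply heball s
  rw [Metric.mem_ball, Prod.dist_eq]
  refine max_lt ?_ ?_
  · exact lt_of_lt_of_le (hcloseC s hsJ).1 (hεe s hsJ)
  · exact lt_of_lt_of_le (hcloseC s hsJ).2 (hεe s hsJ)
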